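/- Let x and t be real numbers with 1 - 2tx + t² > 0 and x ≠ t. Then 15·F(t,x)⁷ = 3·F^{(1)}(t,x)/(x-t)⁵ + 3·F^{(2)}(t,x)/(x-t)⁴ + F^{(3)}(t,x)/(x-t)³. -/

import Mathlib

open Real Filter

private lemma hasDerivAt_u (x s : ℝ) :
    HasDerivAt (fun s : ℝ => 1 - 2 * s * x + s ^ 2) (2 * s - 2 * x) s := by
  have h1 : HasDerivAt (fun s : ℝ => 2 * s * x) (2 * x) s := by
    simpa [mul_comm, mul_assoc] using ((hasDerivAt_id s).const_mul 2).mul_const x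
  have h2 := hasDerivAt_pow 2 s
  have := ((hasDerivAt_const s (1:ℝ)).sub h1).add h2
  refine this.congr_deriv ?_
  push_cast
  ring

private lemma hasDerivAt_F (x s : ℝ) (hs : 1 - 2 * s * x + s ^ 2 > 0) :
    HasDerivAt (fun s : ℝ => (1 - 2 * s * x + s ^ 2) ^ (-(1:ℝ)/2))
      ((x - s) * (1 - 2 * s * x + s ^ 2) ^ (-(3:ℝ)/2)) s := by
  have := (hasDerivAt_u x s).rpow_const (p := -(1:ℝ)/2) (Or.inl hs.ne')
  convert this using 1
  rw [show (-(1:ℝ)/2 - 1) = -(3:ℝ)/2 by norm_num]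
  ring

private lemma hasDerivAt_G1 (x s : ℝ) (hs : 1 - 2 * s * x + s ^ 2 > 0) :
    HasDerivAt (fun s : ℝ => (x - s) * (1 - 2 * s * x + s ^ 2) ^ (-(3:ℝ)/2))
      (-((1 - 2 * s * x + s ^ 2) ^ (-(3:ℝ)/2))
        + 3 * (x - s) ^ 2 * (1 - 2 * s * x + s ^ 2) ^ (-(5:ℝ)/2)) s := by
  have ha : HasDerivAt (fun s : ℝ => x - s) (-1) s := by
    exact ((hasDerivAt_const s x).sub (hasDerivAt_id s)).congr_deriv (by simp)
  have hb := (hasDerivAt_u x s).rpow_const (p := -(3:ℝ)/2) (Or.inl hs.ne')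
  have := ha.mul hb
  refine this.congr_deriv ?_
  rw [show (-(3:ℝ)/2 - 1) = -(5:ℝ)/2 by norm_num]
  ring

private lemma hasDerivAt_G2 (x s : ℝ) (hs : 1 - 2 * s * x + s ^ 2 > 0) :
    HasDerivAt (fun s : ℝ => -((1 - 2 * s * x + s ^ 2) ^ (-(3:ℝ)/2))
        + 3 * (x - s) ^ 2 * (1 - 2 * s * x + s ^ 2) ^ (-(5:ℝ)/2))
      (-9 * (x - s) * (1 - 2 * s * x + s ^ 2) ^ (-(5:ℝ)/2)
        + 15 * (x - s) ^ 3 * (1 - 2 * s * x + s ^ 2) ^ (-(7:ℝ)/2)) s := by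
  have hb := (hasDerivAt_u x s).rpow_const (p := -(3:ℝ)/2) (Or.inl hs.ne')
  have hc := (hasDerivAt_u x s).rpow_const (p := -(5:ℝ)/2) (Or.inl hs.ne')
  have ha : HasDerivAt (fun s : ℝ => 3 * (x - s) ^ 2) (3 * (2 * (x - s) * (-1))) s := by
    have : HasDerivAt (fun s : ℝ => x - s) (-1) s := by
      exact ((hasDerivAt_const s x).sub (hasDerivAt_id s)).congr_deriv (by simp)
    simpa using ((this.pow 2).const_mul 3)
  have := hb.neg.add (ha.mul hc)
  refine this.congr_deriv ?_
  rw [show (-(3:ℝ)/2 - 1) = -(5:ℝ)/2 by norm_num, show (-(5:ℝ)/2 - 1) = -(7:ℝ)/2 by norm_num]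
  ring

theorem legendre_genFun_pow_seven (x t : ℝ) (h : 1 - 2 * t * x + t ^ 2 > 0) (hxt : x ≠ t) :
    15 * ((1 - 2 * t * x + t ^ 2) ^ (-(1 : ℝ) / 2)) ^ 7
      = 3 * iteratedDeriv 1 (fun s : ℝ => (1 - 2 * s * x + s ^ 2) ^ (-(1 : ℝ) / 2)) t / (x - t) ^ 5
        + 3 * iteratedDeriv 2 (fun s : ℝ => (1 - 2 * s * x + s ^ 2) ^ (-(1 : ℝ) / 2)) t / (x - t) ^ 4
        + iteratedDeriv 3 (fun s : ℝ => (1 - 2 * s * x + s ^ 2) ^ (-(1 : ℝ) / 2)) t / (x - t) ^ 3 := by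
  set f : ℝ → ℝ := fun s => (1 - 2 * s * x + s ^ 2) ^ (-(1:ℝ)/2) with hf
  set g1 : ℝ → ℝ := fun s => (x - s) * (1 - 2 * s * x + s ^ 2) ^ (-(3:ℝ)/2) with hg1
  set g2 : ℝ → ℝ := fun s => -((1 - 2 * s * x + s ^ 2) ^ (-(3:ℝ)/2))
      + 3 * (x - s) ^ 2 * (1 - 2 * s * x + s ^ 2) ^ (-(5:ℝ)/2) with hg2
  set g3 : ℝ → ℝ := fun s => -9 * (x - s) * (1 - 2 * s * x + s ^ 2) ^ (-(5:ℝ)/2)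
      + 15 * (x - s) ^ 3 * (1 - 2 * s * x + s ^ 2) ^ (-(7:ℝ)/2) with hg3
  have hopen : IsOpen {s : ℝ | 0 < 1 - 2 * s * x + s ^ 2} :=
    isOpen_lt continuous_const (by continuity)
  have hev : ∀ᶠ s in nhds t, 0 < 1 - 2 * s * x + s ^ 2 := hopen.eventually_mem h
  have hdf : deriv f =ᶠ[nhds t] g1 := hev.mono fun s hs => (hasDerivAt_F x s hs).deriv
  have hdg1 : deriv g1 =ᶠ[nhds t] g2 := hev.mono fun s hs => (hasDerivAt_G1 x s hs).deriv
  have h1 : iteratedDeriv 1 f t = g1 t := by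
    rw [iteratedDeriv_one]; exact (hasDerivAt_F x t h).deriv
  have h2 : iteratedDeriv 2 f t = g2 t := by
    rw [show (2:ℕ) = 1 + 1 from rfl, iteratedDeriv_succ, iteratedDeriv_one]
    rw [hdf.deriv_eq]
    exact (hasDerivAt_G1 x t h).deriv
  have h3 : iteratedDeriv 3 f t = g3 t := by
    rw [show (3:ℕ) = 2 + 1 from rfl, iteratedDeriv_succ]
    have e2 : iteratedDeriv 2 f = deriv (deriv f) := by
      rw [show (2:ℕ) = 1 + 1 from rfl, iteratedDeriv_succ, iteratedDeriv_one]
    rw [e2]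
    have : deriv (deriv f) =ᶠ[nhds t] g2 := hdf.deriv.trans hdg1
    rw [this.deriv_eq]
    exact (hasDerivAt_G2 x t h).deriv
  rw [h1, h2, h3, hg1, hg2, hg3]
  simp only
  set v : ℝ := 1 - 2 * t * x + t ^ 2 with hv
  set a : ℝ := x - t with ha
  have ha0 : a ≠ 0 := sub_ne_zero.mpr hxt
  have hv0 : (0:ℝ) < v := h
  have e7 : (v ^ (-(1:ℝ)/2)) ^ 7 = v ^ (-(7:ℝ)/2) := by
    rw [← Real.rpow_natCast (v ^ (-(1:ℝ)/2)) 7, ← Real.rpow_mul hv0.le]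
    norm_num
  have e3 : v ^ (-(3:ℝ)/2) = v ^ 2 * v ^ (-(7:ℝ)/2) := by
    rw [← Real.rpow_natCast v 2, ← Real.rpow_add hv0]
    norm_num
  have e5 : v ^ (-(5:ℝ)/2) = v * v ^ (-(7:ℝ)/2) := by
    nth_rewrite 2 [← Real.rpow_one v]
    rw [← Real.rpow_add hv0]
    norm_num
  rw [e7, e3, e5]
  field_simp
  ring
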